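/- Two wreath cycles w, v ∈ S = K ≀_Γ Sym(Γ) are conjugate in S if and only if they have the same load, i.e., their top components have the same order and their yades lie in the same K-conjugacy class. -/

import Mathlib

set_option linter.unusedSectionVars false

/-- The wreath product `K ≀_Γ Sym(Γ)` (with right-action conventions from the paper):
multiplication `(f,h)(e,g) = (f · e^{h⁻¹}, hg)` where `[γ](f·e^{h⁻¹}) = [γ]f * [γ^h]e`. -/
structure Wr (K : Type*) (Γ : Type*) where
  base : Γ → K
  top : Equiv.Perm Γ

namespace Wr

variable {K Γ : Type*} [Group K]

theorem ext' {w v : Wr K Γ} (h1 : w.base = v.base) (h2 : w.top = v.top) : w = v := by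
  cases w; cases v; cases h1; cases h2; rfl

instance : Group (Wr K Γ) where
  mul w v := ⟨fun γ => w.base γ * v.base (w.top γ), w.top.trans v.top⟩
  one := ⟨fun _ => 1, 1⟩
  inv w := ⟨fun γ => (w.base (w.top⁻¹ γ))⁻¹, w.top⁻¹⟩
  mul_assoc a b c := ext' (funext fun γ => mul_assoc _ _ _) (Equiv.trans_assoc _ _ _)
  one_mul a := ext' (funext fun γ => one_mul _) (Equiv.refl_trans _)
  mul_one a := ext' (funext fun γ => mul_one _) (Equiv.trans_refl _)
  inv_mul_cancel a := ext' (funext fun γ => inv_mul_cancel _) (Equiv.symm_trans_self _)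

/-- The support of a permutation, as a set. -/
def psupp (h : Equiv.Perm Γ) : Set Γ := {γ | h γ ≠ γ}

/-- The territory of a wreath product element. -/
def terr (w : Wr K Γ) : Set Γ := psupp w.top ∪ {γ | w.base γ ≠ 1}

/-- Wreath cycles: either trivial top and a singleton territory, or the top is a
single nontrivial cycle and the territory equals its support. -/
def IsWreathCycle (w : Wr K Γ) : Prop :=
  (w.top = 1 ∧ ∃ γ₀, terr w = {γ₀}) ∨ (w.top.IsCycle ∧ terr w = psupp w.top)

/-- The yade of `w` at `γ`: the ordered product `∏_{i=0}^{|h|-1} [γ^{h^i}]f`. -/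
noncomputable def yade (w : Wr K Γ) (γ : Γ) : K :=
  ((List.range (orderOf w.top)).map fun i => w.base ((w.top ^ i) γ)).prod

end Wr

open Wr

section Aux

variable {K Γ : Type*} [Group K]

lemma wr_mul_base (w v : Wr K Γ) (γ : Γ) : (w * v).base γ = w.base γ * v.base (w.top γ) := rfl

lemma wr_mul_top (w v : Wr K Γ) (γ : Γ) : (w * v).top γ = v.top (w.top γ) := rfl

lemma wr_semiconj_iff (c w v : Wr K Γ) :
    c * w = v * c ↔ (∀ γ, w.top (c.top γ) = c.top (v.top γ)) ∧
      ∀ γ, c.base γ * w.base (c.top γ) = v.base γ * c.base (v.top γ) := by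
  constructor
  · intro hcw
    refine ⟨fun γ => ?_, fun γ => ?_⟩
    · exact congrArg (fun x => Wr.top x γ) hcw
    · exact congrArg (fun x => Wr.base x γ) hcw
  · rintro ⟨h1, h2⟩
    exact Wr.ext' (funext h2) (Equiv.ext h1)

lemma wr_isConj_iff {w v : Wr K Γ} : IsConj w v ↔ ∃ c : Wr K Γ, c * w = v * c := by
  rw [isConj_iff]
  constructor
  · rintro ⟨c, hc⟩; exact ⟨c, by rw [← hc]; group⟩
  · rintro ⟨c, hc⟩; exact ⟨c, by rw [hc]; group⟩

lemma base_eq_one_of_not_mem_terr {w : Wr K Γ} {γ : Γ} (h : γ ∉ terr w) : w.base γ = 1 := by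
  by_contra hb
  exact h (Or.inr hb)

lemma top_pow_comm {g h p : Equiv.Perm Γ} (hT : ∀ γ, h (g γ) = g (p γ)) :
    ∀ (i : ℕ) (γ : Γ), (h ^ i) (g γ) = g ((p ^ i) γ) := by
  intro i
  induction i with
  | zero => intro γ; simp
  | succ i ih =>
    intro γ
    rw [pow_succ, pow_succ]
    simp only [Equiv.Perm.mul_apply]
    rw [hT, ih]

/-- Partial yade products. -/
noncomputable def Vfun (w : Wr K Γ) (β : Γ) (i : ℕ) : K :=
  ((List.range i).map fun j => w.base ((w.top ^ j) β)).prod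

lemma yade_eq_Vfun (w : Wr K Γ) (β : Γ) : yade w β = Vfun w β (orderOf w.top) := rfl

lemma Vfun_zero (w : Wr K Γ) (β : Γ) : Vfun w β 0 = 1 := rfl

lemma Vfun_succ (w : Wr K Γ) (β : Γ) (i : ℕ) :
    Vfun w β (i + 1) = Vfun w β i * w.base ((w.top ^ i) β) := by
  simp [Vfun, List.range_succ]

lemma Vfun_add_orderOf (w : Wr K Γ) (β : Γ) (k : ℕ) :
    Vfun w β (orderOf w.top + k) = yade w β * Vfun w β k := by
  have h1 : w.top ^ orderOf w.top = 1 := pow_orderOf_eq_one w.top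
  rw [yade_eq_Vfun]
  simp only [Vfun, List.range_add, List.map_append, List.prod_append]
  congr 1
  simp only [List.map_map]
  congr 1
  apply List.map_congr_left
  intro j _
  simp only [Function.comp_apply]
  congr 1
  calc (w.top ^ (orderOf w.top + j)) β = (w.top ^ j) ((w.top ^ orderOf w.top) β) := by
        rw [add_comm, pow_add, Equiv.Perm.mul_apply]
    _ = (w.top ^ j) β := by rw [h1, Equiv.Perm.one_apply]

lemma wr_telescope {c w v : Wr K Γ} (hT : ∀ γ, w.top (c.top γ) = c.top (v.top γ))
    (hB : ∀ γ, c.base γ * w.base (c.top γ) = v.base γ * c.base (v.top γ)) (β : Γ) :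
    ∀ m : ℕ, c.base β * Vfun w (c.top β) m = Vfun v β m * c.base ((v.top ^ m) β) := by
  intro m
  induction m with
  | zero => simp [Vfun_zero]
  | succ m ih =>
    rw [Vfun_succ, Vfun_succ, ← mul_assoc, ih, mul_assoc, mul_assoc,
      top_pow_comm hT m β, hB ((v.top ^ m) β)]
    congr 2
    rw [← Equiv.Perm.mul_apply, ← pow_succ']

lemma yade_rotate (w : Wr K Γ) (γ : Γ) :
    w.base γ * yade w (w.top γ) = yade w γ * w.base γ := by
  have h1 : w.top ^ orderOf w.top = 1 := pow_orderOf_eq_one w.top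
  have key : ∀ j : ℕ, (w.top ^ j) (w.top γ) = (w.top ^ (j + 1)) γ := by
    intro j; rw [pow_succ, Equiv.Perm.mul_apply]
  have B : Vfun w γ (orderOf w.top + 1) = w.base γ * yade w (w.top γ) := by
    rw [Vfun, List.range_succ_eq_map, List.map_cons, List.prod_cons, List.map_map]
    simp only [pow_zero, Equiv.Perm.one_apply]
    congr 1
  rw [← B, Vfun_succ, yade_eq_Vfun, h1, Equiv.Perm.one_apply]

lemma yade_isConj_pow (w : Wr K Γ) (γ : Γ) (i : ℕ) :
    IsConj (yade w γ) (yade w ((w.top ^ i) γ)) := by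
  induction i with
  | zero =>
    simp only [pow_zero, Equiv.Perm.one_apply]
    exact IsConj.refl _
  | succ i ih =>
    refine ih.trans ?_
    rw [pow_succ', Equiv.Perm.mul_apply]
    have := yade_rotate w ((w.top ^ i) γ)
    exact (isConj_iff.mpr ⟨w.base ((w.top ^ i) γ), by rw [mul_inv_eq_iff_eq_mul, this]⟩).symm

lemma yade_isConj_of_terr [Finite Γ] {w : Wr K Γ} (hw : IsWreathCycle w)
    {α α' : Γ} (hα : α ∈ terr w) (hα' : α' ∈ terr w) : IsConj (yade w α) (yade w α') := by
  rcases hw with ⟨_, γ₀, ht⟩ | ⟨hc, ht⟩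
  · rw [ht] at hα hα'
    rw [Set.mem_singleton_iff] at hα hα'
    rw [hα, hα']
  · rw [ht] at hα hα'
    obtain ⟨i, hi⟩ := hc.exists_pow_eq hα hα'
    rw [← hi]
    exact yade_isConj_pow w α i

end Aux

section Aux2

variable {K Γ : Type*} [Group K]

lemma yade_of_top_one {w : Wr K Γ} (h : w.top = 1) (γ : Γ) : yade w γ = w.base γ := by
  simp only [yade, h, orderOf_one]
  simp

/-- Twisted partial products used to build the conjugating base function. -/
noncomputable def Efun (w v : Wr K Γ) (α β : Γ) (u : K) (i : ℕ) : K :=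
  (Vfun v β i)⁻¹ * u * Vfun w α i

lemma Efun_succ (w v : Wr K Γ) (α β : Γ) (u : K) (i : ℕ) :
    Efun w v α β u (i + 1)
      = (v.base ((v.top ^ i) β))⁻¹ * Efun w v α β u i * w.base ((w.top ^ i) α) := by
  simp only [Efun, Vfun_succ, mul_inv_rev]
  group

lemma Efun_period (w v : Wr K Γ) (α β : Γ) (u : K)
    (hord : orderOf w.top = orderOf v.top)
    (hu : u * yade w α = yade v β * u) (k : ℕ) :
    Efun w v α β u (orderOf v.top + k) = Efun w v α β u k := by
  have h1 : Vfun v β (orderOf v.top + k) = yade v β * Vfun v β k := Vfun_add_orderOf v β k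
  have h2 : Vfun w α (orderOf v.top + k) = yade w α * Vfun w α k := by
    rw [← hord]; exact Vfun_add_orderOf w α k
  have key : (yade v β)⁻¹ * u * yade w α = u := by
    rw [mul_assoc, hu, ← mul_assoc, inv_mul_cancel, one_mul]
  rw [Efun, h1, h2, Efun]
  calc (yade v β * Vfun v β k)⁻¹ * u * (yade w α * Vfun w α k)
      = (Vfun v β k)⁻¹ * ((yade v β)⁻¹ * u * yade w α) * Vfun w α k := by group
    _ = (Vfun v β k)⁻¹ * u * Vfun w α k := by rw [key]

lemma Efun_mod (w v : Wr K Γ) (α β : Γ) (u : K)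
    (hord : orderOf w.top = orderOf v.top)
    (hu : u * yade w α = yade v β * u) (hn0 : 0 < orderOf v.top) (i : ℕ) :
    Efun w v α β u i = Efun w v α β u (i % orderOf v.top) := by
  induction i using Nat.strong_induction_on with
  | _ i ih =>
    rcases lt_or_ge i (orderOf v.top) with h | h
    · rw [Nat.mod_eq_of_lt h]
    · have hsplit : i = orderOf v.top + (i - orderOf v.top) := by omega
      rw [hsplit, Efun_period w v α β u hord hu, Nat.add_mod_left,
        ih _ (by omega)]

open Classical in
/-- The base function of the conjugating element in the cycle case. -/
noncomputable def efun (w v : Wr K Γ) (α β : Γ) (u : K) (γ : Γ) : K :=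
  if hx : ∃ i, (v.top ^ i) β = γ then Efun w v α β u (Nat.find hx) else 1

lemma efun_apply (w v : Wr K Γ) (α β : Γ) (u : K) (i : ℕ)
    (hE : ∀ j, (v.top ^ j) β = (v.top ^ i) β → Efun w v α β u j = Efun w v α β u i) :
    efun w v α β u ((v.top ^ i) β) = Efun w v α β u i := by
  classical
  rw [efun, dif_pos ⟨i, rfl⟩]
  exact hE _ (Nat.find_spec (⟨i, rfl⟩ : ∃ j, (v.top ^ j) β = (v.top ^ i) β))

lemma wr_conj_of_fix {w v : Wr K Γ} (hw1 : w.top = 1) {γ₀ : Γ} (htw : terr w = {γ₀})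
    (hv1 : v.top = 1) {δ₀ : Γ} (htv : terr v = {δ₀})
    (hy : IsConj (yade w γ₀) (yade v δ₀)) : IsConj w v := by
  classical
  obtain ⟨u, hu⟩ := isConj_iff.1 hy
  have hu' : u * yade w γ₀ = yade v δ₀ * u := by rw [← hu]; group
  rw [yade_of_top_one hw1, yade_of_top_one hv1] at hu'
  refine wr_isConj_iff.2 ⟨⟨fun γ => if γ = δ₀ then u else 1, Equiv.swap γ₀ δ₀⟩,
    (wr_semiconj_iff _ _ _).2 ⟨?_, ?_⟩⟩
  · intro γ; rw [hw1, hv1]; rfl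
  · intro γ
    show (if γ = δ₀ then u else 1) * w.base (Equiv.swap γ₀ δ₀ γ)
      = v.base γ * (if v.top γ = δ₀ then u else 1)
    rw [hv1]
    simp only [Equiv.Perm.one_apply]
    by_cases hγ : γ = δ₀
    · subst hγ
      rw [if_pos rfl, Equiv.swap_apply_right]
      simpa using hu'
    · rw [if_neg hγ]
      have hbv : v.base γ = 1 := base_eq_one_of_not_mem_terr (by rw [htv]; simpa using hγ)
      have hswap : Equiv.swap γ₀ δ₀ γ ≠ γ₀ := by
        intro hc
        apply hγ
        have h2 := congrArg (Equiv.swap γ₀ δ₀) hc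
        rwa [Equiv.swap_apply_self, Equiv.swap_apply_left] at h2
      have hbw : w.base (Equiv.swap γ₀ δ₀ γ) = 1 :=
        base_eq_one_of_not_mem_terr (by rw [htw]; simpa using hswap)
      simp [hbv, hbw, hγ]

lemma wr_conj_of_cycle [Fintype Γ] {w v : Wr K Γ}
    (hcw : w.top.IsCycle) (htw : terr w = psupp w.top)
    (hcv : v.top.IsCycle) (htv : terr v = psupp v.top)
    (hord : orderOf w.top = orderOf v.top)
    (hy : ∀ α ∈ terr w, ∀ β ∈ terr v, IsConj (yade w α) (yade v β)) :
    IsConj w v := by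
  classical
  obtain ⟨σ, hσ⟩ := isConj_iff.1 (hcv.isConj hcw (by rw [← hcv.orderOf, ← hcw.orderOf, hord]))
  have hT : ∀ γ, w.top (σ γ) = σ (v.top γ) := by
    intro γ
    have hts : w.top * σ = σ * v.top := by rw [← hσ]; group
    calc w.top (σ γ) = (w.top * σ) γ := rfl
      _ = (σ * v.top) γ := by rw [hts]
      _ = σ (v.top γ) := rfl
  obtain ⟨β, hβ1, -⟩ := id hcv
  have hα1 : w.top (σ β) ≠ σ β := by
    rw [hT]; intro hc; exact hβ1 (σ.injective hc)
  have hβt : β ∈ terr v := by rw [htv]; exact hβ1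
  have hαt : σ β ∈ terr w := by rw [htw]; exact hα1
  obtain ⟨u, hu⟩ := isConj_iff.1 (hy (σ β) hαt β hβt)
  have hu' : u * yade w (σ β) = yade v β * u := by rw [← hu]; group
  have hn0 : 0 < orderOf v.top := orderOf_pos v.top
  have hL0 : ∀ k : ℕ, (v.top ^ k) β = β → orderOf v.top ∣ k := by
    intro k hk
    exact orderOf_dvd_of_pow_eq_one ((hcv.pow_eq_one_iff' hβ1).2 hk)
  have hL : ∀ i j : ℕ, (v.top ^ i) β = (v.top ^ j) β →
      i % orderOf v.top = j % orderOf v.top := by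
    have key : ∀ i j : ℕ, i ≤ j → (v.top ^ i) β = (v.top ^ j) β →
        i % orderOf v.top = j % orderOf v.top := by
      intro i j hij hpow
      have h1 : (v.top ^ (j - i)) β = β := by
        apply (v.top ^ i).injective
        rw [← Equiv.Perm.mul_apply, ← pow_add, Nat.add_sub_cancel' hij]
        exact hpow.symm
      exact (Nat.modEq_iff_dvd' hij).2 (hL0 _ h1)
    intro i j hpow
    rcases le_total i j with h | h
    · exact key i j h hpow
    · exact (key j i h hpow.symm).symm
  have hE : ∀ i j : ℕ, (v.top ^ j) β = (v.top ^ i) β →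
      Efun w v (σ β) β u j = Efun w v (σ β) β u i := by
    intro i j hij
    rw [Efun_mod w v (σ β) β u hord hu' hn0 j, hL j i hij,
      ← Efun_mod w v (σ β) β u hord hu' hn0 i]
  refine wr_isConj_iff.2 ⟨⟨efun w v (σ β) β u, σ⟩, (wr_semiconj_iff _ _ _).2 ⟨hT, ?_⟩⟩
  intro γ
  show efun w v (σ β) β u γ * w.base (σ γ) = v.base γ * efun w v (σ β) β u (v.top γ)
  by_cases hγ : v.top γ = γ
  · have hbv : v.base γ = 1 :=
      base_eq_one_of_not_mem_terr (by rw [htv]; exact fun hc => hc hγ)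
    have hσγ : w.top (σ γ) = σ γ := by rw [hT, hγ]
    have hbw : w.base (σ γ) = 1 :=
      base_eq_one_of_not_mem_terr (by rw [htw]; exact fun hc => hc hσγ)
    rw [hγ, hbv, hbw, one_mul, mul_one]
  · obtain ⟨i, rfl⟩ := hcv.exists_pow_eq hβ1 hγ
    have h1 : efun w v (σ β) β u ((v.top ^ i) β) = Efun w v (σ β) β u i :=
      efun_apply w v (σ β) β u i (hE i)
    have h2 : v.top ((v.top ^ i) β) = (v.top ^ (i + 1)) β := by
      rw [pow_succ', Equiv.Perm.mul_apply]
    have h3 : efun w v (σ β) β u ((v.top ^ (i + 1)) β) = Efun w v (σ β) β u (i + 1) :=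
      efun_apply w v (σ β) β u (i + 1) (hE (i + 1))
    have h4 : σ ((v.top ^ i) β) = (w.top ^ i) (σ β) := (top_pow_comm hT i β).symm
    rw [h1, h2, h3, h4, Efun_succ, ← mul_assoc, ← mul_assoc, mul_inv_cancel, one_mul]

end Aux2

section Aux3

variable {K Γ : Type*} [Group K]

lemma wr_forward [Fintype Γ] {w v : Wr K Γ} (hw : IsWreathCycle w) (hc : IsConj w v) :
    orderOf w.top = orderOf v.top ∧
      ∀ α ∈ terr w, ∀ β ∈ terr v, IsConj (yade w α) (yade v β) := by
  obtain ⟨c, hc⟩ := wr_isConj_iff.1 hc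
  obtain ⟨hT, hB⟩ := (wr_semiconj_iff c w v).1 hc
  have htop : w.top * c.top = c.top * v.top := Equiv.ext fun γ => hT γ
  have hvt : v.top = c.top⁻¹ * w.top * c.top := by
    rw [mul_assoc, htop, ← mul_assoc, inv_mul_cancel, one_mul]
  have hord : orderOf w.top = orderOf v.top := by
    have h1 := orderOf_injective (MulAut.conj c.top⁻¹).toMonoidHom
      (MulEquiv.injective _) w.top
    have h2 : (MulAut.conj c.top⁻¹).toMonoidHom w.top = c.top⁻¹ * w.top * c.top := by
      simp [MulAut.conj]
    rw [hvt, ← h2, h1]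
  refine ⟨hord, fun α hα β hβ => ?_⟩
  have h1 := wr_telescope hT hB β (orderOf v.top)
  have h2 : (v.top ^ orderOf v.top) β = β := by rw [pow_orderOf_eq_one]; rfl
  rw [h2] at h1
  have hyW : yade w (c.top β) = Vfun w (c.top β) (orderOf v.top) := by
    rw [yade_eq_Vfun, hord]
  have hyV : yade v β = Vfun v β (orderOf v.top) := yade_eq_Vfun v β
  have hconj2 : IsConj (yade w (c.top β)) (yade v β) :=
    isConj_iff.2 ⟨c.base β, by rw [hyW, hyV, mul_inv_eq_iff_eq_mul]; exact h1⟩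
  have hgβ : c.top β ∈ terr w := by
    rcases hβ with h | h
    · exact Or.inl fun hcc => h (c.top.injective ((hT β).symm.trans hcc))
    · by_cases htop2 : w.top (c.top β) = c.top β
      · refine Or.inr ?_
        have hfix : v.top β = β := c.top.injective ((hT β).symm.trans htop2)
        have hBβ := hB β
        rw [hfix] at hBβ
        intro hcc
        rw [hcc, mul_one] at hBβ
        exact h (right_eq_mul.1 hBβ)
      · exact Or.inl htop2
  exact (yade_isConj_of_terr hw hα hgβ).trans hconj2

end Aux3


/-- two wreath cycles are conjugate in `S = K ≀_Γ Sym(Γ)` iff they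
have the same load, i.e. equal top component orders and conjugate yades. -/
theorem wreathCycle_isConj_iff_load {K Γ : Type*} [Group K] [Fintype Γ]
    (w v : Wr K Γ) (hw : IsWreathCycle w) (hv : IsWreathCycle v) :
    IsConj w v ↔
      (orderOf w.top = orderOf v.top ∧
        ∀ α ∈ terr w, ∀ β ∈ terr v, IsConj (yade w α) (yade v β)) := by
  constructor
  · exact wr_forward hw
  · rintro ⟨hord, hy⟩
    rcases hw with ⟨hw1, γ₀, htw⟩ | ⟨hcw, htw⟩ <;> rcases hv with ⟨hv1, δ₀, htv⟩ | ⟨hcv, htv⟩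
    · exact wr_conj_of_fix hw1 htw hv1 htv
        (hy γ₀ (by rw [htw]; exact Set.mem_singleton _) δ₀ (by rw [htv]; exact Set.mem_singleton _))
    · exfalso
      rw [hw1, orderOf_one] at hord
      exact hcv.ne_one (orderOf_eq_one_iff.1 hord.symm)
    · exfalso
      rw [hv1, orderOf_one] at hord
      exact hcw.ne_one (orderOf_eq_one_iff.1 hord)
    · exact wr_conj_of_cycle hcw htw hcv htv hord hy
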